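/- Let H be a graded connected commutative Hopf algebra over ℚ, with multiplication m, coproduct Δ, and antipode S, and let φ: H → H be a derivation (i.e., φ∘m = m∘(φ⊗id + id⊗φ)). Then the convolution S ⋆ φ := m∘(S⊗φ)∘Δ is an infinitesimal character, i.e., (S⋆φ)∘m = m∘((S⋆φ)⊗ε + ε⊗(S⋆φ)), where ε is the counit. -/

import Mathlib

open scoped TensorProduct

/-- Convolution product of linear endomorphisms of a Hopf algebra:
`φ ⋆ ψ = m ∘ (φ ⊗ ψ) ∘ Δ`. -/
noncomputable def conv {H : Type} [CommRing H] [HopfAlgebra ℚ H]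
    (φ ψ : H →ₗ[ℚ] H) : H →ₗ[ℚ] H :=
  LinearMap.mul' ℚ H ∘ₗ TensorProduct.map φ ψ ∘ₗ (Coalgebra.comul (R := ℚ))

/-- The counit viewed as an endomorphism `u ∘ ε : H → H`. -/
noncomputable def epsEndo (H : Type) [CommRing H] [HopfAlgebra ℚ H] : H →ₗ[ℚ] H :=
  Algebra.linearMap ℚ H ∘ₗ (Coalgebra.counit (R := ℚ))



open scoped TensorProduct
open Coalgebra

section CConv
variable {R C A : Type*} [CommRing R] [AddCommGroup C] [Module R C] [Coalgebra R C]
  [CommRing A] [Algebra R A]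

/-- General convolution on `Hom(C, A)`. -/
noncomputable def cconv (f g : C →ₗ[R] A) : C →ₗ[R] A :=
  LinearMap.mul' R A ∘ₗ TensorProduct.map f g ∘ₗ Coalgebra.comul

lemma cconv_repr (f g : C →ₗ[R] A) {a : C} {ι : Type*} (r : Coalgebra.Repr R a ι) :
    cconv f g a = ∑ i ∈ r.index, f (r.left i) * g (r.right i) := by
  simp [cconv, ← r.eq, map_sum]

lemma cconv_assoc (f g h : C →ₗ[R] A) : cconv (cconv f g) h = cconv f (cconv g h) := by
  ext a
  have key := congrArg
    (LinearMap.mul' R A ∘ₗ TensorProduct.map f (LinearMap.mul' R A ∘ₗ TensorProduct.map g h))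
    (Coalgebra.sum_tmul_tmul_eq (ℛ R a) (fun i => ℛ R ((ℛ R a).left i))
      (fun i => ℛ R ((ℛ R a).right i)))
  simp only [map_sum, LinearMap.comp_apply, TensorProduct.map_tmul,
    LinearMap.mul'_apply] at key
  rw [cconv_repr _ _ (ℛ R a), cconv_repr _ _ (ℛ R a)]
  calc ∑ i ∈ (ℛ R a).index, cconv f g ((ℛ R a).left i) * h ((ℛ R a).right i)
      = ∑ i ∈ (ℛ R a).index, ∑ j ∈ (ℛ R ((ℛ R a).left i)).index,
          f ((ℛ R ((ℛ R a).left i)).left j) *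
            (g ((ℛ R ((ℛ R a).left i)).right j) * h ((ℛ R a).right i)) := by
        refine Finset.sum_congr rfl fun i _ => ?_
        rw [cconv_repr _ _ (ℛ R ((ℛ R a).left i)), Finset.sum_mul]
        exact Finset.sum_congr rfl fun j _ => mul_assoc _ _ _
    _ = ∑ i ∈ (ℛ R a).index, ∑ j ∈ (ℛ R ((ℛ R a).right i)).index,
          f ((ℛ R a).left i) * (g ((ℛ R ((ℛ R a).right i)).left j) *
            h ((ℛ R ((ℛ R a).right i)).right j)) := key
    _ = ∑ i ∈ (ℛ R a).index, f ((ℛ R a).left i) * cconv g h ((ℛ R a).right i) := by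
        refine Finset.sum_congr rfl fun i _ => ?_
        rw [cconv_repr _ _ (ℛ R ((ℛ R a).right i)), Finset.mul_sum]

lemma cconv_counit_left (f : C →ₗ[R] A) :
    cconv (Algebra.linearMap R A ∘ₗ Coalgebra.counit) f = f := by
  ext a
  rw [cconv_repr _ _ (ℛ R a)]
  have := congrArg (TensorProduct.lid R A)
    (Coalgebra.sum_counit_tmul_map_eq f a (repr := ℛ R a))
  simp only [map_sum, TensorProduct.lid_tmul, one_smul] at this
  simpa [Algebra.smul_def] using this

lemma cconv_counit_right (f : C →ₗ[R] A) :
    cconv f (Algebra.linearMap R A ∘ₗ Coalgebra.counit) = f := by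
  ext a
  rw [cconv_repr _ _ (ℛ R a)]
  have := congrArg (TensorProduct.rid R A)
    (Coalgebra.sum_map_tmul_counit_eq f a (repr := ℛ R a))
  simp only [map_sum, TensorProduct.rid_tmul, one_smul] at this
  rw [← this]
  refine Finset.sum_congr rfl fun i _ => ?_
  rw [Algebra.smul_def, LinearMap.comp_apply, Algebra.linearMap_apply]
  exact (Algebra.commutes _ _).symm

end CConv

section Hopf
variable {H : Type} [CommRing H] [HopfAlgebra ℚ H]

local notation "S" => HopfAlgebra.antipode (R := ℚ) (A := H)

lemma cconv_tmul' (f g : H ⊗[ℚ] H →ₗ[ℚ] H) (a b : H)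
    {ι κ : Type*} (ra : Coalgebra.Repr ℚ a ι) (rb : Coalgebra.Repr ℚ b κ) :
    (LinearMap.mul' ℚ H ∘ₗ TensorProduct.map f g ∘ₗ Coalgebra.comul) (a ⊗ₜ[ℚ] b) =
      ∑ i ∈ ra.index, ∑ j ∈ rb.index,
        f (ra.left i ⊗ₜ[ℚ] rb.left j) * g (ra.right i ⊗ₜ[ℚ] rb.right j) := by
  simp only [LinearMap.comp_apply, TensorProduct.comul_tmul,
    TensorProduct.map_tmul]
  rw [← ra.eq, ← rb.eq]
  simp only [TensorProduct.sum_tmul, TensorProduct.tmul_sum, map_sum,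
    TensorProduct.AlgebraTensorModule.tensorTensorTensorComm_tmul, TensorProduct.map_tmul,
    LinearMap.mul'_apply]
  exact Finset.sum_comm


lemma sum_antipode_key (a b : H) {ι κ : Type*} (ra : Coalgebra.Repr ℚ a ι) (rb : Coalgebra.Repr ℚ b κ) :
    ∑ i ∈ ra.index, ∑ j ∈ rb.index,
      S (ra.left i * rb.left j) * (ra.right i * rb.right j) =
      algebraMap ℚ H (Coalgebra.counit a * Coalgebra.counit b) := by
  have hXY : (∑ i ∈ ra.index, ∑ j ∈ rb.index,
      (ra.left i * rb.left j) ⊗ₜ[ℚ] (ra.right i * rb.right j)) =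
      Coalgebra.comul (R := ℚ) (a * b) := by
    rw [Bialgebra.comul_mul, ← ra.eq, ← rb.eq, Finset.sum_mul_sum]
    exact Finset.sum_congr rfl fun i _ => Finset.sum_congr rfl fun j _ =>
      (Algebra.TensorProduct.tmul_mul_tmul _ _ _ _).symm
  calc ∑ i ∈ ra.index, ∑ j ∈ rb.index,
        S (ra.left i * rb.left j) * (ra.right i * rb.right j)
      = LinearMap.mul' ℚ H ((LinearMap.rTensor H S)
          (∑ i ∈ ra.index, ∑ j ∈ rb.index,
            (ra.left i * rb.left j) ⊗ₜ[ℚ] (ra.right i * rb.right j))) := by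
        simp [map_sum]
    _ = LinearMap.mul' ℚ H ((LinearMap.rTensor H S) (Coalgebra.comul (R := ℚ) (a * b))) := by
        rw [hXY]
    _ = algebraMap ℚ H (Coalgebra.counit (R := ℚ) (a * b)) :=
        HopfAlgebra.mul_antipode_rTensor_comul_apply (R := ℚ) (a * b)
    _ = algebraMap ℚ H (Coalgebra.counit a * Coalgebra.counit b) := by
        rw [Bialgebra.counit_mul]

lemma antipode_comp_mul :
    (S) ∘ₗ LinearMap.mul' ℚ H = LinearMap.mul' ℚ H ∘ₗ TensorProduct.map S S := by
  have h1 : cconv ((S) ∘ₗ LinearMap.mul' ℚ H) (LinearMap.mul' ℚ H) =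
      Algebra.linearMap ℚ H ∘ₗ Coalgebra.counit := by
    apply TensorProduct.ext'
    intro a b
    rw [show cconv ((S) ∘ₗ LinearMap.mul' ℚ H) (LinearMap.mul' ℚ H) =
      LinearMap.mul' ℚ H ∘ₗ TensorProduct.map ((S) ∘ₗ LinearMap.mul' ℚ H)
        (LinearMap.mul' ℚ H) ∘ₗ Coalgebra.comul from rfl,
      cconv_tmul' _ _ a b (ℛ ℚ a) (ℛ ℚ b)]
    simp only [LinearMap.comp_apply, LinearMap.mul'_apply, Algebra.linearMap_apply,
      TensorProduct.map_tmul]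
    rw [TensorProduct.counit_tmul, smul_eq_mul, mul_comm]
    exact sum_antipode_key a b (ℛ ℚ a) (ℛ ℚ b)
  have h2 : cconv (LinearMap.mul' ℚ H) (LinearMap.mul' ℚ H ∘ₗ TensorProduct.map S S) =
      Algebra.linearMap ℚ H ∘ₗ Coalgebra.counit := by
    apply TensorProduct.ext'
    intro a b
    rw [show cconv (LinearMap.mul' ℚ H) (LinearMap.mul' ℚ H ∘ₗ TensorProduct.map S S) =
      LinearMap.mul' ℚ H ∘ₗ TensorProduct.map (LinearMap.mul' ℚ H)
        (LinearMap.mul' ℚ H ∘ₗ TensorProduct.map S S) ∘ₗ Coalgebra.comul from rfl,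
      cconv_tmul' _ _ a b (ℛ ℚ a) (ℛ ℚ b)]
    simp only [LinearMap.comp_apply, LinearMap.mul'_apply, Algebra.linearMap_apply,
      TensorProduct.map_tmul]
    rw [TensorProduct.counit_tmul, smul_eq_mul, mul_comm]
    calc ∑ i ∈ (ℛ ℚ a).index, ∑ j ∈ (ℛ ℚ b).index,
          (ℛ ℚ a).left i * (ℛ ℚ b).left j *
            (S ((ℛ ℚ a).right i) * S ((ℛ ℚ b).right j))
        = (∑ i ∈ (ℛ ℚ a).index, (ℛ ℚ a).left i * S ((ℛ ℚ a).right i)) *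
          (∑ j ∈ (ℛ ℚ b).index, (ℛ ℚ b).left j * S ((ℛ ℚ b).right j)) := by
          rw [Finset.sum_mul_sum]
          exact Finset.sum_congr rfl fun i _ => Finset.sum_congr rfl fun j _ =>
            mul_mul_mul_comm _ _ _ _
      _ = algebraMap ℚ H (Coalgebra.counit a) * algebraMap ℚ H (Coalgebra.counit b) := by
          rw [HopfAlgebra.sum_mul_antipode_eq_algebraMap_counit (ℛ ℚ a), HopfAlgebra.sum_mul_antipode_eq_algebraMap_counit (ℛ ℚ b)]
      _ = algebraMap ℚ H (Coalgebra.counit a * Coalgebra.counit b) := (map_mul _ _ _).symm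
  calc (S) ∘ₗ LinearMap.mul' ℚ H
      = cconv ((S) ∘ₗ LinearMap.mul' ℚ H) (Algebra.linearMap ℚ H ∘ₗ Coalgebra.counit) :=
        (cconv_counit_right _).symm
    _ = cconv ((S) ∘ₗ LinearMap.mul' ℚ H)
        (cconv (LinearMap.mul' ℚ H) (LinearMap.mul' ℚ H ∘ₗ TensorProduct.map S S)) := by
        rw [h2]
    _ = cconv (cconv ((S) ∘ₗ LinearMap.mul' ℚ H) (LinearMap.mul' ℚ H))
        (LinearMap.mul' ℚ H ∘ₗ TensorProduct.map S S) := (cconv_assoc _ _ _).symm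
    _ = cconv (Algebra.linearMap ℚ H ∘ₗ Coalgebra.counit)
        (LinearMap.mul' ℚ H ∘ₗ TensorProduct.map S S) := by rw [h1]
    _ = LinearMap.mul' ℚ H ∘ₗ TensorProduct.map S S := cconv_counit_left _

lemma antipode_mul (a b : H) : S (a * b) = S a * S b := by
  simpa using congr($(antipode_comp_mul (H := H)) (a ⊗ₜ[ℚ] b))

end Hopf

/-- If `H` is a graded connected commutative Hopf algebra over `ℚ` and
`φ : H → H` is a derivation, then `S ⋆ φ` is an infinitesimal character. -/
theorem antipode_conv_derivation_isInfinitesimalCharacter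
    {H : Type} [CommRing H] [HopfAlgebra ℚ H]
    (𝒜 : ℕ → Submodule ℚ H) [GradedAlgebra 𝒜]
    (hconn : 𝒜 0 = (1 : Submodule ℚ H))
    (hΔ : ∀ n : ℕ, ∀ x ∈ 𝒜 n, (Coalgebra.comul (R := ℚ)) x ∈
      ⨆ (p : ℕ × ℕ) (_ : p.1 + p.2 = n),
        LinearMap.range (TensorProduct.map (𝒜 p.1).subtype (𝒜 p.2).subtype))
    (φ : H →ₗ[ℚ] H)
    (hφ : φ ∘ₗ LinearMap.mul' ℚ H =
      LinearMap.mul' ℚ H ∘ₗ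
        (TensorProduct.map φ LinearMap.id + TensorProduct.map LinearMap.id φ)) :
    (conv (HopfAlgebra.antipode (R := ℚ)) φ) ∘ₗ LinearMap.mul' ℚ H =
      LinearMap.mul' ℚ H ∘ₗ
        (TensorProduct.map (conv (HopfAlgebra.antipode (R := ℚ)) φ) (epsEndo H) +
         TensorProduct.map (epsEndo H) (conv (HopfAlgebra.antipode (R := ℚ)) φ)) := by
  have hder : ∀ u v : H, φ (u * v) = φ u * v + u * φ v := by
    intro u v
    simpa using congr($(hφ) (u ⊗ₜ[ℚ] v))
  have hS : ∀ u v : H, (HopfAlgebra.antipode (R := ℚ)) (u * v) =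
      (HopfAlgebra.antipode (R := ℚ)) u * (HopfAlgebra.antipode (R := ℚ)) v :=
    antipode_mul
  apply TensorProduct.ext'
  intro x y
  have hconv : conv (HopfAlgebra.antipode (R := ℚ)) φ = cconv (HopfAlgebra.antipode (R := ℚ)) φ := rfl
  have hXY : (∑ i ∈ (ℛ ℚ x).index, ∑ j ∈ (ℛ ℚ y).index,
      ((ℛ ℚ x).left i * (ℛ ℚ y).left j) ⊗ₜ[ℚ] ((ℛ ℚ x).right i * (ℛ ℚ y).right j)) =
      Coalgebra.comul (R := ℚ) (x * y) := by
    rw [Bialgebra.comul_mul, ← (ℛ ℚ x).eq, ← (ℛ ℚ y).eq, Finset.sum_mul_sum]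
    exact Finset.sum_congr rfl fun i _ => Finset.sum_congr rfl fun j _ =>
      (Algebra.TensorProduct.tmul_mul_tmul _ _ _ _).symm
  have lhs : (conv (HopfAlgebra.antipode (R := ℚ)) φ ∘ₗ LinearMap.mul' ℚ H) (x ⊗ₜ[ℚ] y) =
      ∑ i ∈ (ℛ ℚ x).index, ∑ j ∈ (ℛ ℚ y).index,
        (HopfAlgebra.antipode (R := ℚ)) ((ℛ ℚ x).left i * (ℛ ℚ y).left j) *
          φ ((ℛ ℚ x).right i * (ℛ ℚ y).right j) := by
    rw [LinearMap.comp_apply, LinearMap.mul'_apply, hconv,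
      show cconv (HopfAlgebra.antipode (R := ℚ)) φ (x * y) =
        LinearMap.mul' ℚ H (TensorProduct.map (HopfAlgebra.antipode (R := ℚ)) φ
          (Coalgebra.comul (R := ℚ) (x * y))) from rfl, ← hXY]
    simp [map_sum]
  rw [lhs]
  have exp : ∀ i ∈ (ℛ ℚ x).index, ∀ j ∈ (ℛ ℚ y).index,
      (HopfAlgebra.antipode (R := ℚ)) ((ℛ ℚ x).left i * (ℛ ℚ y).left j) *
        φ ((ℛ ℚ x).right i * (ℛ ℚ y).right j) =
      ((HopfAlgebra.antipode (R := ℚ)) ((ℛ ℚ x).left i) * φ ((ℛ ℚ x).right i)) *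
        ((HopfAlgebra.antipode (R := ℚ)) ((ℛ ℚ y).left j) * (ℛ ℚ y).right j) +
      ((HopfAlgebra.antipode (R := ℚ)) ((ℛ ℚ x).left i) * (ℛ ℚ x).right i) *
        ((HopfAlgebra.antipode (R := ℚ)) ((ℛ ℚ y).left j) * φ ((ℛ ℚ y).right j)) := by
    intro i _ j _
    rw [hS, hder]
    ring
  calc ∑ i ∈ (ℛ ℚ x).index, ∑ j ∈ (ℛ ℚ y).index,
        (HopfAlgebra.antipode (R := ℚ)) ((ℛ ℚ x).left i * (ℛ ℚ y).left j) *
          φ ((ℛ ℚ x).right i * (ℛ ℚ y).right j)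
      = (∑ i ∈ (ℛ ℚ x).index,
          (HopfAlgebra.antipode (R := ℚ)) ((ℛ ℚ x).left i) * φ ((ℛ ℚ x).right i)) *
        (∑ j ∈ (ℛ ℚ y).index,
          (HopfAlgebra.antipode (R := ℚ)) ((ℛ ℚ y).left j) * (ℛ ℚ y).right j) +
        (∑ i ∈ (ℛ ℚ x).index,
          (HopfAlgebra.antipode (R := ℚ)) ((ℛ ℚ x).left i) * (ℛ ℚ x).right i) *
        (∑ j ∈ (ℛ ℚ y).index,
          (HopfAlgebra.antipode (R := ℚ)) ((ℛ ℚ y).left j) * φ ((ℛ ℚ y).right j)) := by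
        rw [Finset.sum_mul_sum, Finset.sum_mul_sum, ← Finset.sum_add_distrib]
        refine Finset.sum_congr rfl fun i hi => ?_
        rw [← Finset.sum_add_distrib]
        exact Finset.sum_congr rfl fun j hj => exp i hi j hj
    _ = conv (HopfAlgebra.antipode (R := ℚ)) φ x * epsEndo H y +
        epsEndo H x * conv (HopfAlgebra.antipode (R := ℚ)) φ y := by
        rw [hconv, cconv_repr _ _ (ℛ ℚ x), cconv_repr _ _ (ℛ ℚ y),
          HopfAlgebra.sum_antipode_mul_eq_algebraMap_counit (ℛ ℚ x), HopfAlgebra.sum_antipode_mul_eq_algebraMap_counit (ℛ ℚ y)]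
        rfl
    _ = (LinearMap.mul' ℚ H ∘ₗ
        (TensorProduct.map (conv (HopfAlgebra.antipode (R := ℚ)) φ) (epsEndo H) +
         TensorProduct.map (epsEndo H) (conv (HopfAlgebra.antipode (R := ℚ)) φ))) (x ⊗ₜ[ℚ] y) := by
        simp
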